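/- Let K be a field in which 2 is invertible (characteristic ≠ 2) and let F: K^n → K^n be a polynomial map of degree at most 2 whose Jacobian determinant det jac F does not vanish at any point of K^n. Then F is injective on K^n. -/

import Mathlib

open MvPolynomial

lemma sum_le_two_cases {n : ℕ} (d : Fin n →₀ ℕ) (hd : (d.sum fun _ k => k) ≤ 2) :
    d = 0 ∨ (∃ i, d = Finsupp.single i 1) ∨ (∃ i, d = Finsupp.single i 2) ∨
    (∃ i j, i ≠ j ∧ d = Finsupp.single i 1 + Finsupp.single j 1) := by
  induction d using Finsupp.induction with
  | zero => exact Or.inl rfl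
  | single_add i k f hif hk ih =>
    rw [Finsupp.sum_add_index' (fun _ => rfl) (fun _ _ _ => rfl),
      Finsupp.sum_single_index rfl] at hd
    have hf : (f.sum fun _ k => k) ≤ 2 := le_trans (Nat.le_add_left _ _) hd
    rcases ih hf with h0 | ⟨j, hj⟩ | ⟨j, hj⟩ | ⟨j, l, hjl, h⟩
    · subst h0
      rw [Finsupp.sum_zero_index] at hd
      have hk2 : k ≤ 2 := by omega
      interval_cases k
      · exact absurd rfl hk
      · exact Or.inr (Or.inl ⟨i, by simp⟩)
      · exact Or.inr (Or.inr (Or.inl ⟨i, by simp⟩))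
    · subst hj
      have hsum : (Finsupp.single j 1).sum (fun _ k => k) = 1 := Finsupp.sum_single_index rfl
      rw [hsum] at hd
      have hk1 : k = 1 := by omega
      subst hk1
      have : i ≠ j := by
        intro h; subst h; exact hif (by simp)
      exact Or.inr (Or.inr (Or.inr ⟨i, j, this, rfl⟩))
    · subst hj
      rw [Finsupp.sum_single_index rfl] at hd; omega
    · subst h
      rw [Finsupp.sum_add_index' (fun _ => rfl) (fun _ _ _ => rfl),
        Finsupp.sum_single_index rfl, Finsupp.sum_single_index rfl] at hd
      omega

lemma mono_key {K : Type*} [Field K] (h2 : (2 : K) ≠ 0) {n : ℕ} (a b : Fin n → K)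
    (d : Fin n →₀ ℕ) (hd : (d.sum fun _ k => k) ≤ 2) (c : K) :
    eval a (monomial d c) - eval b (monomial d c) =
      ∑ j, eval (fun k => (a k + b k) / 2) (pderiv j (monomial d c)) * (a j - b j) := by
  rcases sum_le_two_cases d hd with h0 | ⟨i, hi⟩ | ⟨i, hi⟩ | ⟨i, j, hij, h⟩
  · subst h0; simp
  · subst hi
    have h1 : (monomial (Finsupp.single i 1) c : MvPolynomial (Fin n) K) = C c * X i := by
      rw [X, C_mul_monomial, mul_one]
    rw [h1]
    simp [apply_ite (eval fun k => (a k + b k) / 2), Pi.single_apply, ite_mul, mul_ite,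
      Finset.sum_ite_eq', mul_sub]
  · subst hi
    have h1 : (monomial (Finsupp.single i 2) c : MvPolynomial (Fin n) K) = C c * (X i * X i) := by
      rw [← pow_two, X_pow_eq_monomial, C_mul_monomial, mul_one]
    rw [h1]
    simp [apply_ite (eval fun k => (a k + b k) / 2), Pi.single_apply, ite_mul, mul_ite,
      Finset.sum_ite_eq', mul_sub]
    simp [mul_ite, ite_mul, mul_zero, zero_mul, mul_add, add_mul, Finset.sum_add_distrib,
      Finset.sum_ite_eq, Finset.sum_ite_eq']
    field_simp
    ring
  · subst h
    have h1 : (monomial (Finsupp.single i 1 + Finsupp.single j 1) c : MvPolynomial (Fin n) K)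
        = C c * (X i * X j) := by
      rw [X, X, monomial_mul, one_mul, C_mul_monomial, mul_one]
    rw [h1]
    simp [apply_ite (eval fun k => (a k + b k) / 2), Pi.single_apply, ite_mul, mul_ite, add_mul,
      Finset.sum_add_distrib, Finset.sum_ite_eq', mul_sub]
    simp [mul_ite, ite_mul, mul_zero, zero_mul, mul_add, add_mul, Finset.sum_add_distrib,
      Finset.sum_ite_eq, Finset.sum_ite_eq']
    field_simp
    ring

lemma taylor_mid {K : Type*} [Field K] (h2 : (2 : K) ≠ 0) {n : ℕ} (a b : Fin n → K)
    (P : MvPolynomial (Fin n) K) (hP : P.totalDegree ≤ 2) :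
    eval a P - eval b P =
      ∑ j, eval (fun k => (a k + b k) / 2) (pderiv j P) * (a j - b j) := by
  conv_lhs => rw [P.as_sum]
  conv_rhs => rw [P.as_sum]
  simp only [map_sum, Finset.sum_mul]
  rw [Finset.sum_comm, ← Finset.sum_sub_distrib]
  refine Finset.sum_congr rfl fun d hd => ?_
  exact mono_key h2 a b d (le_trans (le_totalDegree hd) hP) _

/-- Over a field in which `2` is invertible, a polynomial map of
degree at most `2` whose Jacobian determinant vanishes nowhere is injective. -/
theorem quadratic_injective_of_nonvanishing_jacobian
    {K : Type*} [Field K] (h2 : (2 : K) ≠ 0) {n : ℕ}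
    (F : Fin n → MvPolynomial (Fin n) K)
    (hdeg : ∀ i, (F i).totalDegree ≤ 2)
    (hjac : ∀ v : Fin n → K,
      eval v ((Matrix.of fun i j => pderiv j (F i)).det) ≠ 0) :
    Function.Injective (fun v : Fin n → K => fun i => eval v (F i)) := by
  intro a b hab
  set m : Fin n → K := fun k => (a k + b k) / 2 with hm
  have hker : ∀ i, ∑ j, eval m (pderiv j (F i)) * (a j - b j) = 0 := by
    intro i
    rw [← taylor_mid h2 a b (F i) (hdeg i)]
    have h := congrFun hab i
    simp only at h
    rw [h, sub_self]
  have hdet : ((Matrix.of fun i j => pderiv j (F i)).map (eval m)).det ≠ 0 := by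
    rw [← RingHom.mapMatrix_apply, ← RingHom.map_det]; exact hjac m
  have hv : ((Matrix.of fun i j => pderiv j (F i)).map (eval m)).mulVec (a - b) = 0 := by
    funext i
    simpa [Matrix.mulVec, dotProduct, Matrix.map_apply] using hker i
  have hz := Matrix.eq_zero_of_mulVec_eq_zero hdet hv
  funext x
  have := congrFun hz x
  simpa [sub_eq_zero] using this
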